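/- The octic parametrization X = t^8-8t^7+12t^6+24t^5-10t^4-24t^3+12t^2+8t+1, Y = 8t^7-16t^6-8t^5-8t^3+16t^2+8t, Z = t^8+12t^6-32t^5-10t^4-32t^3+12t^2+1, T = t^8-4t^6+22t^4-4t^2+1 (for rational t) never yields a solution to the four-distance problem, because it always violates the necessary condition v_3(Z) < v_3(T): if v_3(t) < 0 then v_3(T) = 8·v_3(t) = v_3(Z), and if v_3(t) ≥ 0 then T ≡ 1 (mod 3) so v_3(T) = 0 ≤ v_3(Z). -/

import Mathlib

lemma zmod3_key (x y : ZMod 3) (h : ¬(x = 0 ∧ y = 0)) :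
    x^8 - 4*x^6*y^2 + 22*x^4*y^4 - 4*x^2*y^6 + y^8 ≠ 0 := by
  revert h; revert x y; decide

theorem octic_parametrization_fails (t X Y Z T : ℚ)
    (hX : X = t^8 - 8*t^7 + 12*t^6 + 24*t^5 - 10*t^4 - 24*t^3 + 12*t^2 + 8*t + 1)
    (hY : Y = 8*t^7 - 16*t^6 - 8*t^5 - 8*t^3 + 16*t^2 + 8*t)
    (hZ : Z = t^8 + 12*t^6 - 32*t^5 - 10*t^4 - 32*t^3 + 12*t^2 + 1)
    (hT : T = t^8 - 4*t^6 + 22*t^4 - 4*t^2 + 1) :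
    ¬ padicValRat 3 Z < padicValRat 3 T := by
  have hp : Fact (Nat.Prime 3) := ⟨by norm_num⟩
  set a : ℤ := t.num with ha
  set b : ℤ := (t.den : ℤ) with hb
  have hbne : (b : ℚ) ≠ 0 := by
    simp [hb, t.den_nz]
  have ht : t = (a : ℚ) / (b : ℚ) := by
    rw [ha, hb]; push_cast; exact (Rat.num_div_den t).symm
  set NT : ℤ := a^8 - 4*a^6*b^2 + 22*a^4*b^4 - 4*a^2*b^6 + b^8 with hNT
  set NZ : ℤ := a^8 + 12*a^6*b^2 - 32*a^5*b^3 - 10*a^4*b^4 - 32*a^3*b^5 + 12*a^2*b^6 + b^8 with hNZ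
  -- coprimality: not both divisible by 3
  have hcop : ¬((3 : ℤ) ∣ a ∧ (3 : ℤ) ∣ b) := by
    rintro ⟨h1, h2⟩
    have := t.reduced
    have h3 : (3 : ℤ) ∣ Int.gcd a b := Int.dvd_coe_gcd h1 h2
    rw [Int.gcd] at h3
    simp [ha, hb] at h3
    omega
  have hNTdvd : ¬ (3 : ℤ) ∣ NT := by
    intro hd
    have : ((NT : ZMod 3)) = 0 := by
      exact_mod_cast (ZMod.intCast_zmod_eq_zero_iff_dvd NT 3).2 hd
    rw [hNT] at this
    push_cast at this
    refine zmod3_key (a : ZMod 3) (b : ZMod 3) ?_ (by linear_combination this)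
    rintro ⟨h1, h2⟩
    exact hcop ⟨(ZMod.intCast_zmod_eq_zero_iff_dvd a 3).1 h1,
      (ZMod.intCast_zmod_eq_zero_iff_dvd b 3).1 h2⟩
  have hNTne : NT ≠ 0 := fun h => hNTdvd (h ▸ dvd_zero 3)
  have hTeq : T = ((NT : ℚ)) / ((b^8 : ℤ) : ℚ) := by
    rw [hT, ht, hNT]; push_cast; field_simp
  have hb8ne : (((b^8 : ℤ) : ℚ)) ≠ 0 := by push_cast; positivity
  have hvNT : padicValRat 3 (NT : ℚ) = 0 := by
    rw [padicValRat.of_int, padicValInt.eq_zero_of_not_dvd (by exact_mod_cast hNTdvd)]; simp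
  have hvb8 : 0 ≤ padicValRat 3 ((b^8 : ℤ) : ℚ) := by
    rw [padicValRat.of_int]; positivity
  have hvT : padicValRat 3 T = - padicValRat 3 ((b^8 : ℤ) : ℚ) := by
    rw [hTeq, padicValRat.div (by exact_mod_cast hNTne) hb8ne, hvNT]; ring
  by_cases hZ0 : Z = 0
  · rw [hZ0]
    simp only [padicValRat.zero, not_lt, hvT]
    linarith
  · have hZeq : Z = ((NZ : ℚ)) / ((b^8 : ℤ) : ℚ) := by
      rw [hZ, ht, hNZ]; push_cast; field_simp
    have hNZne : (NZ : ℚ) ≠ 0 := by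
      intro h; apply hZ0; rw [hZeq, h, zero_div]
    have hvNZ : 0 ≤ padicValRat 3 (NZ : ℚ) := by
      rw [padicValRat.of_int]; positivity
    have hvZ : padicValRat 3 Z = padicValRat 3 (NZ : ℚ) - padicValRat 3 ((b^8 : ℤ) : ℚ) := by
      rw [hZeq, padicValRat.div hNZne hb8ne]
    rw [hvZ, hvT]; linarith
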